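/- For any velocity field ξ, define η^{l+1}(γ) := γ^{l+1} and η^k(γ) := γ^{l+1} − Σ_{k<k'≤l+1} ξ(γ^{k'}, t_{k'})Δt for 0 ≤ k ≤ l. Set σ̃^k := E_{μ(·;ξ)}[|γ^k − η^k(γ)|²] and d̃^k := E_{μ(·;ξ)}[|γ^k − η^k(γ)|]. Then for all 0 ≤ k ≤ l+1: (d̃^k)² ≤ σ̃^k ≤ ((t_{l+1} − t_k)/λ)·Δx. -/

import Mathlib

open scoped BigOperators Classical

noncomputable section

def dx (N : ℕ) : ℝ := 1 / (2 * N)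

/-- Time mesh `Δt = 1/(2K)`. -/
def dt (K : ℕ) : ℝ := 1 / (2 * K)

/-- Hyperbolic ratio `λ = Δt/Δx`. -/
def lam (N K : ℕ) : ℝ := dt K / dx N

/-- Position (in units of `Δx`, i.e. the integer index `m`) at time step `k` of the backward
random walk starting at `x_n` at time `t_{l+1}`, whose step from time `j+1` down to time `j`
is `+Δx` if `s j = true` and `-Δx` otherwise. -/
def pos (n : ℤ) (l : ℕ) (s : Fin (l + 1) → Bool) (k : ℕ) : ℤ :=
  n + ∑ j : Fin (l + 1), if k ≤ (j : ℕ) then (if s j then 1 else -1) else 0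

/-- The probability density `μ(γ;ξ)` of the path encoded by `s`: the product over all backward
steps of the transition probability `1/2 - (λ/2)ξ` (step `+Δx`) or `1/2 + (λ/2)ξ` (step `-Δx`),
where `ξ` is evaluated at the grid point `(γ^{j+1}, t_{j+1})` from which the step is taken. -/
def walkMeasure (N K : ℕ) (n : ℤ) (l : ℕ) (ξ : ℤ → ℕ → ℝ) (s : Fin (l + 1) → Bool) : ℝ :=
  ∏ j : Fin (l + 1),
    (if s j then 1 / 2 - lam N K / 2 * ξ (pos n l s ((j : ℕ) + 1)) ((j : ℕ) + 1)
     else 1 / 2 + lam N K / 2 * ξ (pos n l s ((j : ℕ) + 1)) ((j : ℕ) + 1))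

/-- `p_m^k`: the total mass of paths sitting at `x_m` at time `t_k`. -/
def pmass (N K : ℕ) (n : ℤ) (l : ℕ) (ξ : ℤ → ℕ → ℝ) (m : ℤ) (k : ℕ) : ℝ :=
  ∑ s : Fin (l + 1) → Bool, if pos n l s k = m then walkMeasure N K n l ξ s else 0


/-- The deterministic process `η^k(γ) = γ^{l+1} - Σ_{k<k'≤l+1} ξ(γ^{k'}, t_{k'})Δt`
induced by the walk `γ` (encoded by `s`) and the velocity field `ξ`. -/
def eta (N K : ℕ) (n : ℤ) (l : ℕ) (ξ : ℤ → ℕ → ℝ) (s : Fin (l + 1) → Bool) (k : ℕ) : ℝ :=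
  (n : ℝ) * dx N -
    ∑ j : Fin (l + 1),
      (if k ≤ (j : ℕ) then ξ (pos n l s ((j : ℕ) + 1)) ((j : ℕ) + 1) * dt K else 0)

section aux

/-- Update-style construction: the function with value `b` at `i` and given by `r` elsewhere. -/
def upd {m : ℕ} (i : Fin m) (b : Bool) (r : {j : Fin m // j ≠ i} → Bool) : Fin m → Bool :=
  (Equiv.piSplitAt i fun _ => Bool).symm (b, r)

lemma upd_self {m : ℕ} (i : Fin m) (b : Bool) (r : {j : Fin m // j ≠ i} → Bool) :
    upd i b r i = b := by
  simp [upd, Equiv.piSplitAt_symm_apply]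

lemma upd_ne {m : ℕ} (i : Fin m) (b : Bool) (r : {j : Fin m // j ≠ i} → Bool)
    {j : Fin m} (h : j ≠ i) : upd i b r j = r ⟨j, h⟩ := by
  simp [upd, Equiv.piSplitAt_symm_apply, h]

lemma upd_agree {m : ℕ} (i : Fin m) (b b' : Bool) (r : {j : Fin m // j ≠ i} → Bool)
    {j : Fin m} (h : j ≠ i) : upd i b r j = upd i b' r j := by
  rw [upd_ne i b r h, upd_ne i b' r h]

lemma sum_split {m : ℕ} (i : Fin m) (f : (Fin m → Bool) → ℝ) :
    ∑ s : Fin m → Bool, f s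
      = ∑ r : {j : Fin m // j ≠ i} → Bool, (f (upd i true r) + f (upd i false r)) := by
  rw [← Equiv.sum_comp (Equiv.piSplitAt i fun _ => Bool).symm f, Fintype.sum_prod_type,
    Fintype.sum_bool, ← Finset.sum_add_distrib]
  rfl

variable (N K : ℕ) (n : ℤ) (l : ℕ) (ξ : ℤ → ℕ → ℝ)

/-- The single-step transition factor. -/
def fac (s : Fin (l + 1) → Bool) (j : Fin (l + 1)) : ℝ :=
  if s j then 1 / 2 - lam N K / 2 * ξ (pos n l s ((j : ℕ) + 1)) ((j : ℕ) + 1)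
  else 1 / 2 + lam N K / 2 * ξ (pos n l s ((j : ℕ) + 1)) ((j : ℕ) + 1)

lemma walkMeasure_eq (s : Fin (l + 1) → Bool) :
    walkMeasure N K n l ξ s = ∏ j : Fin (l + 1), fac N K n l ξ s j := rfl

/-- The measure restricted to steps at index `≥ k`. -/
def W (k : ℕ) (s : Fin (l + 1) → Bool) : ℝ :=
  ∏ j : Fin (l + 1), if k ≤ (j : ℕ) then fac N K n l ξ s j else 1

/-- `X^k - η^k`. -/
def XX (k : ℕ) (s : Fin (l + 1) → Bool) : ℝ :=
  ((pos n l s k : ℤ) : ℝ) * dx N - eta N K n l ξ s k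

lemma pos_congr {k : ℕ} {s s' : Fin (l + 1) → Bool}
    (h : ∀ j : Fin (l + 1), k ≤ (j : ℕ) → s j = s' j) :
    pos n l s k = pos n l s' k := by
  unfold pos
  congr 1
  refine Finset.sum_congr rfl fun j _ => ?_
  by_cases hj : k ≤ (j : ℕ)
  · rw [if_pos hj, if_pos hj, h j hj]
  · rw [if_neg hj, if_neg hj]

lemma fac_congr {j : Fin (l + 1)} {s s' : Fin (l + 1) → Bool}
    (h : ∀ j' : Fin (l + 1), (j : ℕ) ≤ (j' : ℕ) → s j' = s' j') :
    fac N K n l ξ s j = fac N K n l ξ s' j := by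
  unfold fac
  rw [h j le_rfl, pos_congr n l (fun j' hj' => h j' (by omega))]

lemma W_congr {k : ℕ} {s s' : Fin (l + 1) → Bool}
    (h : ∀ j : Fin (l + 1), k ≤ (j : ℕ) → s j = s' j) :
    W N K n l ξ k s = W N K n l ξ k s' := by
  unfold W
  refine Finset.prod_congr rfl fun j _ => ?_
  by_cases hj : k ≤ (j : ℕ)
  · rw [if_pos hj, if_pos hj, fac_congr N K n l ξ (fun j' hj' => h j' (le_trans hj hj'))]
  · rw [if_neg hj, if_neg hj]

lemma eta_congr {k : ℕ} {s s' : Fin (l + 1) → Bool}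
    (h : ∀ j : Fin (l + 1), k ≤ (j : ℕ) → s j = s' j) :
    eta N K n l ξ s k = eta N K n l ξ s' k := by
  unfold eta
  congr 1
  refine Finset.sum_congr rfl fun j _ => ?_
  by_cases hj : k ≤ (j : ℕ)
  · rw [if_pos hj, if_pos hj, pos_congr n l (fun j' hj' => h j' (by omega))]
  · rw [if_neg hj, if_neg hj]

lemma XX_congr {k : ℕ} {s s' : Fin (l + 1) → Bool}
    (h : ∀ j : Fin (l + 1), k ≤ (j : ℕ) → s j = s' j) :
    XX N K n l ξ k s = XX N K n l ξ k s' := by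
  unfold XX
  rw [pos_congr n l h, eta_congr N K n l ξ h]

lemma W_zero (s : Fin (l + 1) → Bool) : W N K n l ξ 0 s = walkMeasure N K n l ξ s := by
  unfold W
  rw [walkMeasure_eq]
  exact Finset.prod_congr rfl fun j _ => if_pos (Nat.zero_le _)

lemma W_top (s : Fin (l + 1) → Bool) : W N K n l ξ (l + 1) s = 1 := by
  unfold W
  refine Finset.prod_eq_one fun j _ => if_neg ?_
  have := j.isLt; omega

lemma W_succ {k : ℕ} (hk : k < l + 1) (s : Fin (l + 1) → Bool) :
    W N K n l ξ k s = fac N K n l ξ s ⟨k, hk⟩ * W N K n l ξ (k + 1) s := by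
  unfold W
  rw [Fintype.prod_eq_mul_prod_compl (⟨k, hk⟩ : Fin (l + 1))
      (fun j => if k ≤ (j : ℕ) then fac N K n l ξ s j else 1),
    Fintype.prod_eq_mul_prod_compl (⟨k, hk⟩ : Fin (l + 1))
      (fun j => if k + 1 ≤ (j : ℕ) then fac N K n l ξ s j else 1)]
  have h1 : (if k ≤ ((⟨k, hk⟩ : Fin (l + 1)) : ℕ) then fac N K n l ξ s ⟨k, hk⟩ else 1)
      = fac N K n l ξ s ⟨k, hk⟩ := if_pos le_rfl
  have h2 : (if k + 1 ≤ ((⟨k, hk⟩ : Fin (l + 1)) : ℕ) then fac N K n l ξ s ⟨k, hk⟩ else 1)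
      = 1 := if_neg (Nat.not_succ_le_self k)
  rw [h1, h2, one_mul]
  congr 1
  refine Finset.prod_congr rfl fun j hj => ?_
  have hjne : j ≠ ⟨k, hk⟩ := by simpa using hj
  have hval : (j : ℕ) ≠ k := fun h => hjne (Fin.ext h)
  have hiff : k ≤ (j : ℕ) ↔ k + 1 ≤ (j : ℕ) := by omega
  simp only [hiff]

lemma fac_add (i : Fin (l + 1)) (r : {j : Fin (l + 1) // j ≠ i} → Bool) :
    fac N K n l ξ (upd i true r) i + fac N K n l ξ (upd i false r) i = 1 := by
  have hpos : pos n l (upd i true r) ((i : ℕ) + 1) = pos n l (upd i false r) ((i : ℕ) + 1) := by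
    refine pos_congr n l fun j hj => upd_agree i true false r ?_
    intro h; rw [h] at hj; omega
  unfold fac
  rw [upd_self, upd_self, hpos]
  simp
  ring

lemma marg (k : ℕ) (hk : k ≤ l + 1) :
    ∀ F : (Fin (l + 1) → Bool) → ℝ,
      (∀ s s' : Fin (l + 1) → Bool, (∀ j : Fin (l + 1), k ≤ (j : ℕ) → s j = s' j) → F s = F s') →
      ∑ s : Fin (l + 1) → Bool, W N K n l ξ k s * F s
        = 2 ^ k * ∑ s : Fin (l + 1) → Bool, walkMeasure N K n l ξ s * F s := by
  induction k with
  | zero =>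
    intro F _
    simp only [W_zero, pow_zero, one_mul]
  | succ k ih =>
    intro F hF
    have hk' : k < l + 1 := hk
    set i : Fin (l + 1) := ⟨k, hk'⟩ with hi
    have key : ∑ s : Fin (l + 1) → Bool, W N K n l ξ (k + 1) s * F s
        = 2 * ∑ s : Fin (l + 1) → Bool, W N K n l ξ k s * F s := by
      rw [sum_split i (fun s => W N K n l ξ (k + 1) s * F s),
        sum_split i (fun s => W N K n l ξ k s * F s), Finset.mul_sum]
      refine Finset.sum_congr rfl fun r _ => ?_
      have hagree : ∀ j : Fin (l + 1), k + 1 ≤ (j : ℕ) → upd i true r j = upd i false r j := by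
        intro j hj
        refine upd_agree i true false r ?_
        intro h; rw [h] at hj; simp [hi] at hj
      have hWeq : W N K n l ξ (k + 1) (upd i true r) = W N K n l ξ (k + 1) (upd i false r) :=
        W_congr N K n l ξ hagree
      have hFeq : F (upd i true r) = F (upd i false r) := hF _ _ hagree
      rw [W_succ N K n l ξ hk' (upd i true r), W_succ N K n l ξ hk' (upd i false r)]
      have hfac := fac_add N K n l ξ i r
      rw [← hi]
      rw [← hWeq, ← hFeq]
      linear_combination (-2 * W N K n l ξ (k + 1) (upd i true r) * F (upd i true r)) * hfac
    rw [key, ih (by omega) F (fun s s' h => hF s s' (fun j hj => h j (by omega))),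
      pow_succ]
    ring

lemma sum_mu : ∑ s : Fin (l + 1) → Bool, walkMeasure N K n l ξ s = 1 := by
  have h := marg N K n l ξ (l + 1) le_rfl (fun _ => 1) (fun _ _ _ => rfl)
  simp only [W_top, mul_one, one_mul] at h
  have hcard : ∑ _s : Fin (l + 1) → Bool, (1 : ℝ) = 2 ^ (l + 1) := by
    rw [Finset.sum_const, nsmul_eq_mul]
    simp [Fintype.card_fun]
  rw [hcard] at h
  have h2 : (2 : ℝ) ^ (l + 1) ≠ 0 := by positivity
  field_simp at h
  linarith [h]

end aux
section aux2

variable (N K : ℕ) (n : ℤ) (l : ℕ) (ξ : ℤ → ℕ → ℝ)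

lemma XX_top (s : Fin (l + 1) → Bool) : XX N K n l ξ (l + 1) s = 0 := by
  have h : ∀ j : Fin (l + 1), ¬(l + 1 ≤ (j : ℕ)) := fun j => by have := j.isLt; omega
  unfold XX eta pos
  rw [Finset.sum_eq_zero (fun j _ => if_neg (h j)), Finset.sum_eq_zero (fun j _ => if_neg (h j))]
  push_cast
  ring

lemma pos_step {k : ℕ} (hk : k < l + 1) (s : Fin (l + 1) → Bool) :
    pos n l s k = pos n l s (k + 1) + (if s ⟨k, hk⟩ then 1 else -1) := by
  unfold pos
  have h : ∀ j : Fin (l + 1),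
      (if k ≤ (j : ℕ) then (if s j then (1 : ℤ) else -1) else 0)
        = (if k + 1 ≤ (j : ℕ) then (if s j then (1 : ℤ) else -1) else 0)
          + (if j = ⟨k, hk⟩ then (if s j then (1 : ℤ) else -1) else 0) := by
    intro j
    by_cases hj : j = (⟨k, hk⟩ : Fin (l + 1))
    · subst hj
      have e1 : ((⟨k, hk⟩ : Fin (l + 1)) : ℕ) = k := rfl
      rw [e1, if_pos (le_refl k), if_pos rfl,
        if_neg (show ¬(k + 1 ≤ k) from by omega), zero_add]
    · have hval : (j : ℕ) ≠ k := fun h => hj (Fin.ext h)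
      have hiff : k ≤ (j : ℕ) ↔ k + 1 ≤ (j : ℕ) := by omega
      simp only [hiff, if_neg hj, add_zero]
  rw [Finset.sum_congr rfl (fun j _ => h j), Finset.sum_add_distrib]
  rw [Finset.sum_ite_eq' Finset.univ (⟨k, hk⟩ : Fin (l + 1))
    (fun j => if s j then (1 : ℤ) else -1)]
  simp only [Finset.mem_univ, if_pos]
  ring

lemma eta_step {k : ℕ} (hk : k < l + 1) (s : Fin (l + 1) → Bool) :
    eta N K n l ξ s k = eta N K n l ξ s (k + 1) - ξ (pos n l s (k + 1)) (k + 1) * dt K := by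
  unfold eta
  have h : ∀ j : Fin (l + 1),
      (if k ≤ (j : ℕ) then ξ (pos n l s ((j : ℕ) + 1)) ((j : ℕ) + 1) * dt K else 0)
        = (if k + 1 ≤ (j : ℕ) then ξ (pos n l s ((j : ℕ) + 1)) ((j : ℕ) + 1) * dt K else 0)
          + (if j = ⟨k, hk⟩ then ξ (pos n l s ((j : ℕ) + 1)) ((j : ℕ) + 1) * dt K else 0) := by
    intro j
    by_cases hj : j = (⟨k, hk⟩ : Fin (l + 1))
    · subst hj
      have e1 : ((⟨k, hk⟩ : Fin (l + 1)) : ℕ) = k := rfl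
      rw [e1, if_pos (le_refl k), if_pos rfl,
        if_neg (show ¬(k + 1 ≤ k) from by omega), zero_add]
    · have hval : (j : ℕ) ≠ k := fun h => hj (Fin.ext h)
      have hiff : k ≤ (j : ℕ) ↔ k + 1 ≤ (j : ℕ) := by omega
      simp only [hiff, if_neg hj, add_zero]
  rw [Finset.sum_congr rfl (fun j _ => h j), Finset.sum_add_distrib]
  rw [Finset.sum_ite_eq' Finset.univ (⟨k, hk⟩ : Fin (l + 1))
    (fun j => ξ (pos n l s ((j : ℕ) + 1)) ((j : ℕ) + 1) * dt K)]
  simp only [Finset.mem_univ, if_pos]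
  ring

lemma dt_eq_lam_dx (hN : 0 < N) : dt K = lam N K * dx N := by
  have hdx : dx N ≠ 0 := by
    unfold dx
    have : (0:ℝ) < (N : ℝ) := by exact_mod_cast hN
    positivity
  unfold lam
  field_simp

lemma XX_step (hN : 0 < N) {k : ℕ} (hk : k < l + 1) (s : Fin (l + 1) → Bool) :
    XX N K n l ξ k s
      = XX N K n l ξ (k + 1) s
        + ((if s ⟨k, hk⟩ then (1 : ℝ) else -1)
            + lam N K * ξ (pos n l s (k + 1)) (k + 1)) * dx N := by
  unfold XX
  rw [eta_step N K n l ξ hk s, pos_step n l hk s, dt_eq_lam_dx N K hN]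
  push_cast
  by_cases hs : s ⟨k, hk⟩ <;> simp [hs] <;> ring

lemma lam_pos (hN : 0 < N) (hK : 0 < K) : 0 < lam N K := by
  have h1 : (0:ℝ) < (N : ℝ) := by exact_mod_cast hN
  have h2 : (0:ℝ) < (K : ℝ) := by exact_mod_cast hK
  unfold lam dt dx
  positivity

lemma lam_mul_abs_le (hN : 0 < N) (hK : 0 < K)
    (hξ : ∀ m k, |ξ m k| ≤ (lam N K)⁻¹) (m : ℤ) (k : ℕ) :
    |lam N K * ξ m k| ≤ 1 := by
  have hl := lam_pos N K hN hK
  rw [abs_mul, abs_of_pos hl]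
  calc lam N K * |ξ m k| ≤ lam N K * (lam N K)⁻¹ :=
        mul_le_mul_of_nonneg_left (hξ m k) hl.le
    _ = 1 := mul_inv_cancel₀ hl.ne'

lemma fac_nonneg (hN : 0 < N) (hK : 0 < K)
    (hξ : ∀ m k, |ξ m k| ≤ (lam N K)⁻¹) (s : Fin (l + 1) → Bool) (j : Fin (l + 1)) :
    0 ≤ fac N K n l ξ s j := by
  have h := abs_le.mp (lam_mul_abs_le N K ξ hN hK hξ (pos n l s ((j : ℕ) + 1)) ((j : ℕ) + 1))
  have e : lam N K / 2 * ξ (pos n l s ((j : ℕ) + 1)) ((j : ℕ) + 1)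
      = lam N K * ξ (pos n l s ((j : ℕ) + 1)) ((j : ℕ) + 1) / 2 := by ring
  unfold fac
  split <;> rw [e] <;> linarith [h.1, h.2]

lemma W_nonneg (hN : 0 < N) (hK : 0 < K)
    (hξ : ∀ m k, |ξ m k| ≤ (lam N K)⁻¹) (k : ℕ) (s : Fin (l + 1) → Bool) :
    0 ≤ W N K n l ξ k s := by
  unfold W
  refine Finset.prod_nonneg fun j _ => ?_
  split
  · exact fac_nonneg N K n l ξ hN hK hξ s j
  · exact zero_le_one

lemma mu_nonneg (hN : 0 < N) (hK : 0 < K)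
    (hξ : ∀ m k, |ξ m k| ≤ (lam N K)⁻¹) (s : Fin (l + 1) → Bool) :
    0 ≤ walkMeasure N K n l ξ s := by
  rw [← W_zero]
  exact W_nonneg N K n l ξ hN hK hξ 0 s

end aux2
section aux3

variable (N K : ℕ) (n : ℤ) (l : ℕ) (ξ : ℤ → ℕ → ℝ)

lemma var_step (hN : 0 < N) (hK : 0 < K)
    (hξ : ∀ m k, |ξ m k| ≤ (lam N K)⁻¹) {k : ℕ} (hk : k < l + 1) :
    ∑ s : Fin (l + 1) → Bool, walkMeasure N K n l ξ s * XX N K n l ξ k s ^ 2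
      ≤ (∑ s : Fin (l + 1) → Bool, walkMeasure N K n l ξ s * XX N K n l ξ (k + 1) s ^ 2)
        + dx N ^ 2 := by
  have hXc : ∀ (k' : ℕ) (s s' : Fin (l + 1) → Bool),
      (∀ j : Fin (l + 1), k' ≤ (j : ℕ) → s j = s' j) →
      XX N K n l ξ k' s ^ 2 = XX N K n l ξ k' s' ^ 2 :=
    fun k' s s' h => by rw [XX_congr N K n l ξ h]
  have hmargk : ∑ s : Fin (l + 1) → Bool, W N K n l ξ k s * XX N K n l ξ k s ^ 2
      = 2 ^ k * ∑ s : Fin (l + 1) → Bool, walkMeasure N K n l ξ s * XX N K n l ξ k s ^ 2 :=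
    marg N K n l ξ k hk.le (fun s => XX N K n l ξ k s ^ 2) (hXc k)
  have hmargk1 : ∑ s : Fin (l + 1) → Bool,
        W N K n l ξ (k + 1) s * (XX N K n l ξ (k + 1) s ^ 2 + dx N ^ 2)
      = 2 ^ (k + 1) * ∑ s : Fin (l + 1) → Bool,
          walkMeasure N K n l ξ s * (XX N K n l ξ (k + 1) s ^ 2 + dx N ^ 2) :=
    marg N K n l ξ (k + 1) hk (fun s => XX N K n l ξ (k + 1) s ^ 2 + dx N ^ 2)
      (fun s s' h => show XX N K n l ξ (k + 1) s ^ 2 + dx N ^ 2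
          = XX N K n l ξ (k + 1) s' ^ 2 + dx N ^ 2 by rw [hXc (k + 1) s s' h])
  set i : Fin (l + 1) := ⟨k, hk⟩ with hi
  have main : ∑ s : Fin (l + 1) → Bool, W N K n l ξ k s * XX N K n l ξ k s ^ 2
      ≤ (1 / 2) * ∑ s : Fin (l + 1) → Bool,
          W N K n l ξ (k + 1) s * (XX N K n l ξ (k + 1) s ^ 2 + dx N ^ 2) := by
    rw [sum_split i (fun s => W N K n l ξ k s * XX N K n l ξ k s ^ 2),
      sum_split i (fun s => W N K n l ξ (k + 1) s * (XX N K n l ξ (k + 1) s ^ 2 + dx N ^ 2)),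
      Finset.mul_sum]
    refine Finset.sum_le_sum fun r _ => ?_
    have hagree : ∀ j : Fin (l + 1), k + 1 ≤ (j : ℕ) → upd i true r j = upd i false r j := by
      intro j hj
      refine upd_agree i true false r ?_
      intro h
      rw [h] at hj
      exact Nat.not_succ_le_self k (by simpa [hi] using hj)
    have hWeq : W N K n l ξ (k + 1) (upd i true r) = W N K n l ξ (k + 1) (upd i false r) :=
      W_congr N K n l ξ hagree
    have hXeq : XX N K n l ξ (k + 1) (upd i true r) = XX N K n l ξ (k + 1) (upd i false r) :=
      XX_congr N K n l ξ hagree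
    have hposeq : pos n l (upd i true r) (k + 1) = pos n l (upd i false r) (k + 1) := by
      refine pos_congr n l fun j hj => hagree j hj
    set a : ℝ := lam N K * ξ (pos n l (upd i true r) (k + 1)) (k + 1) with ha
    have habs : |a| ≤ 1 := lam_mul_abs_le N K ξ hN hK hξ _ _
    have hXT : XX N K n l ξ k (upd i true r)
        = XX N K n l ξ (k + 1) (upd i true r) + (1 + a) * dx N := by
      rw [XX_step N K n l ξ hN hk (upd i true r)]
      rw [show (upd i true r) (⟨k, hk⟩ : Fin (l + 1)) = true from upd_self i true r]
      simp [ha]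
    have hXF : XX N K n l ξ k (upd i false r)
        = XX N K n l ξ (k + 1) (upd i true r) + (-1 + a) * dx N := by
      rw [XX_step N K n l ξ hN hk (upd i false r)]
      rw [show (upd i false r) (⟨k, hk⟩ : Fin (l + 1)) = false from upd_self i false r]
      rw [← hposeq, ← hXeq]
      simp [ha]
    have hfT : fac N K n l ξ (upd i true r) i = 1 / 2 - a / 2 := by
      unfold fac
      rw [upd_self, if_pos rfl, show ((i : Fin (l + 1)) : ℕ) = k from rfl, ha]
      ring
    have hfF : fac N K n l ξ (upd i false r) i = 1 / 2 + a / 2 := by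
      unfold fac
      rw [upd_self, if_neg (by simp), show ((i : Fin (l + 1)) : ℕ) = k from rfl, ha, hposeq]
      ring
    have hW0 : 0 ≤ W N K n l ξ (k + 1) (upd i true r) := W_nonneg N K n l ξ hN hK hξ _ _
    rw [W_succ N K n l ξ hk (upd i true r), W_succ N K n l ξ hk (upd i false r), ← hi,
      hfT, hfF, hXT, hXF, ← hWeq, ← hXeq]
    set w : ℝ := W N K n l ξ (k + 1) (upd i true r)
    set A : ℝ := XX N K n l ξ (k + 1) (upd i true r)
    have ha2 : a ^ 2 ≤ 1 := by
      have := abs_le.mp habs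
      nlinarith [this.1, this.2]
    calc (1 / 2 - a / 2) * w * (A + (1 + a) * dx N) ^ 2
          + (1 / 2 + a / 2) * w * (A + (-1 + a) * dx N) ^ 2
        = w * (A ^ 2 + dx N ^ 2 * (1 - a ^ 2)) := by ring
      _ ≤ w * (A ^ 2 + dx N ^ 2) := by
          refine mul_le_mul_of_nonneg_left ?_ hW0
          nlinarith [sq_nonneg (dx N * a)]
      _ = 1 / 2 * (w * (A ^ 2 + dx N ^ 2) + w * (A ^ 2 + dx N ^ 2)) := by ring
  have hsum1 : ∑ s : Fin (l + 1) → Bool,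
      walkMeasure N K n l ξ s * (XX N K n l ξ (k + 1) s ^ 2 + dx N ^ 2)
      = (∑ s : Fin (l + 1) → Bool, walkMeasure N K n l ξ s * XX N K n l ξ (k + 1) s ^ 2)
        + dx N ^ 2 := by
    simp only [mul_add]
    rw [Finset.sum_add_distrib, ← Finset.sum_mul, sum_mu N K n l ξ, one_mul]
  rw [hmargk] at main
  rw [hmargk1, hsum1] at main
  have h2k : (0:ℝ) < 2 ^ k := by positivity
  have : (2:ℝ) ^ (k + 1) = 2 * 2 ^ k := by ring
  rw [this] at main
  have main2 : 2 ^ k * (∑ s : Fin (l + 1) → Bool, walkMeasure N K n l ξ s * XX N K n l ξ k s ^ 2)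
      ≤ 2 ^ k * ((∑ s : Fin (l + 1) → Bool,
          walkMeasure N K n l ξ s * XX N K n l ξ (k + 1) s ^ 2) + dx N ^ 2) := by
    linarith [main]
  exact le_of_mul_le_mul_left main2 h2k

lemma var_le (hN : 0 < N) (hK : 0 < K)
    (hξ : ∀ m k, |ξ m k| ≤ (lam N K)⁻¹) :
    ∀ d k : ℕ, k + d = l + 1 →
      ∑ s : Fin (l + 1) → Bool, walkMeasure N K n l ξ s * XX N K n l ξ k s ^ 2
        ≤ (d : ℝ) * dx N ^ 2 := by
  intro d
  induction d with
  | zero =>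
    intro k hkd
    have hkk : k = l + 1 := by omega
    subst hkk
    simp [XX_top N K n l ξ]
  | succ d ih =>
    intro k hkd
    have hk : k < l + 1 := by omega
    calc ∑ s : Fin (l + 1) → Bool, walkMeasure N K n l ξ s * XX N K n l ξ k s ^ 2
        ≤ (∑ s : Fin (l + 1) → Bool, walkMeasure N K n l ξ s * XX N K n l ξ (k + 1) s ^ 2)
          + dx N ^ 2 := var_step N K n l ξ hN hK hξ hk
      _ ≤ (d : ℝ) * dx N ^ 2 + dx N ^ 2 := add_le_add_left (ih (k + 1) (by omega)) _
      _ = ((d : ℕ) + 1 : ℝ) * dx N ^ 2 := by ring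
      _ = ((d + 1 : ℕ) : ℝ) * dx N ^ 2 := by push_cast; ring

end aux3
/-- Lemma 3.3: with `σ̃^k = E[|γ^k - η^k(γ)|²]` and `d̃^k = E[|γ^k - η^k(γ)|]`,
one has `(d̃^k)² ≤ σ̃^k ≤ ((t_{l+1} - t_k)/λ)·Δx` for all `0 ≤ k ≤ l+1`. -/
theorem walk_variance_hyperbolic_scaling
    (N K : ℕ) (hN : 0 < N) (hK : 0 < K) (n : ℤ) (l : ℕ)
    (hodd : Odd (n + (l : ℤ) + 1))
    (ξ : ℤ → ℕ → ℝ) (hξ : ∀ m k, |ξ m k| ≤ (lam N K)⁻¹)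
    (k : ℕ) (hk : k ≤ l + 1) :
    (∑ s : Fin (l + 1) → Bool,
        walkMeasure N K n l ξ s * |((pos n l s k : ℝ) * dx N) - eta N K n l ξ s k|) ^ 2
      ≤ (∑ s : Fin (l + 1) → Bool,
          walkMeasure N K n l ξ s * (((pos n l s k : ℝ) * dx N) - eta N K n l ξ s k) ^ 2) ∧
    (∑ s : Fin (l + 1) → Bool,
        walkMeasure N K n l ξ s * (((pos n l s k : ℝ) * dx N) - eta N K n l ξ s k) ^ 2)
      ≤ (((l : ℝ) + 1) * dt K - (k : ℝ) * dt K) / lam N K * dx N := by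
  have hμ : ∀ s : Fin (l + 1) → Bool, 0 ≤ walkMeasure N K n l ξ s :=
    mu_nonneg N K n l ξ hN hK hξ
  constructor
  · have hcs := Finset.sum_mul_sq_le_sq_mul_sq Finset.univ
      (fun s : Fin (l + 1) → Bool => Real.sqrt (walkMeasure N K n l ξ s))
      (fun s : Fin (l + 1) → Bool =>
        Real.sqrt (walkMeasure N K n l ξ s) * |XX N K n l ξ k s|)
    have e1 : ∀ s : Fin (l + 1) → Bool,
        Real.sqrt (walkMeasure N K n l ξ s)
          * (Real.sqrt (walkMeasure N K n l ξ s) * |XX N K n l ξ k s|)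
          = walkMeasure N K n l ξ s * |XX N K n l ξ k s| := fun s => by
      rw [← mul_assoc, Real.mul_self_sqrt (hμ s)]
    have e2 : ∀ s : Fin (l + 1) → Bool,
        Real.sqrt (walkMeasure N K n l ξ s) ^ 2 = walkMeasure N K n l ξ s := fun s =>
      Real.sq_sqrt (hμ s)
    have e3 : ∀ s : Fin (l + 1) → Bool,
        (Real.sqrt (walkMeasure N K n l ξ s) * |XX N K n l ξ k s|) ^ 2
          = walkMeasure N K n l ξ s * XX N K n l ξ k s ^ 2 := fun s => by
      rw [mul_pow, e2, sq_abs]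
    simp only [e1, e2, e3] at hcs
    rw [sum_mu N K n l ξ, one_mul] at hcs
    exact hcs
  · have h := var_le N K n l ξ hN hK hξ (l + 1 - k) k (by omega)
    have hN' : (0:ℝ) < (N : ℝ) := by exact_mod_cast hN
    have hK' : (0:ℝ) < (K : ℝ) := by exact_mod_cast hK
    have hdx : dx N ≠ 0 := by unfold dx; positivity
    have hdt : dt K ≠ 0 := by unfold dt; positivity
    have hcast : ((l + 1 - k : ℕ) : ℝ) = (l : ℝ) + 1 - (k : ℝ) := by
      rw [Nat.cast_sub hk]
      push_cast
      ring
    have hRHS : (((l : ℝ) + 1) * dt K - (k : ℝ) * dt K) / lam N K * dx N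
        = ((l : ℝ) + 1 - (k : ℝ)) * dx N ^ 2 := by
      unfold lam
      field_simp
    rw [hRHS]
    rw [hcast] at h
    exact h
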